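/- arXiv:math/0511033 — 5 statements merged into one kernel-verified Lean document; each statement's English description precedes it below -/
import Mathlib

section
/- Let φ be a closure operator on a locally finite poset P, and let P_φ be the subposet of closed elements (elements x with φ(x) = x). For all a ≤ b in P: Σ_{x : φ(x) = b, a ≤ x} μ_P(a,x) equals μ_{P_φ}(a,b) if both a and b are closed, and equals 0 otherwise. -/
attribute [local instance] Classical.propDecidable

open Finset IncidenceAlgebra

/-- Uniqueness of functions determined by their partial sums over `Icc`. -/
private lemma eq_of_sum_Icc_eq {Q : Type*} [PartialOrder Q] [LocallyFiniteOrder Q]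
    (f g : Q → ℤ) (a : Q)
    (h : ∀ b, a ≤ b → ∑ c ∈ Finset.Icc a b, f c = ∑ c ∈ Finset.Icc a b, g c) :
    ∀ b, a ≤ b → f b = g b := by
  classical
  have H : ∀ n : ℕ, ∀ b, a ≤ b → (Finset.Icc a b).card ≤ n → f b = g b := by
    intro n
    induction n with
    | zero =>
      intro b hb hcard
      exact absurd hcard (by simp [Finset.card_eq_zero, Finset.Icc_eq_empty_iff, hb])
    | succ n ih =>
      intro b hb hcard
      have key := h b hb
      have hIcc : Finset.Icc a b = Finset.Ico a b ∪ {b} := by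
        ext x
        simp only [Finset.mem_Icc, Finset.mem_union, Finset.mem_Ico, Finset.mem_singleton]
        constructor
        · rintro ⟨h1, h2⟩
          rcases lt_or_eq_of_le h2 with h2 | h2
          · exact Or.inl ⟨h1, h2⟩
          · exact Or.inr h2
        · rintro (⟨h1, h2⟩ | rfl)
          · exact ⟨h1, h2.le⟩
          · exact ⟨hb, le_rfl⟩
      have hdisj : Disjoint (Finset.Ico a b) ({b} : Finset Q) := by
        simp [Finset.disjoint_singleton_right]
      have hIco : ∑ c ∈ Finset.Ico a b, f c = ∑ c ∈ Finset.Ico a b, g c := by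
        apply Finset.sum_congr rfl
        intro c hc
        rw [Finset.mem_Ico] at hc
        apply ih c hc.1
        have hsub : Finset.Icc a c ⊆ Finset.Ico a b := fun x hx => by
          rw [Finset.mem_Icc] at hx
          rw [Finset.mem_Ico]
          exact ⟨hx.1, lt_of_le_of_lt hx.2 hc.2⟩
        have : (Finset.Icc a c).card ≤ (Finset.Ico a b).card := Finset.card_le_card hsub
        have hlt : (Finset.Ico a b).card < (Finset.Icc a b).card := by
          rw [hIcc, Finset.card_union_of_disjoint hdisj]
          simp
        omega
      rw [hIcc, Finset.sum_union hdisj, Finset.sum_union hdisj, hIco] at key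
      simpa using key
  exact fun b hb => H (Finset.Icc a b).card b hb le_rfl

/-- Rota's crosscut/closure theorem: if `φ` is a closure operator on a locally
finite poset `P`, then for all `a ≤ b` in `P`, the sum `Σ_{x : a ≤ x, φ(x) = b} μ_P(a,x)`
equals `μ_{P_φ}(a,b)` if `a` and `b` are both closed, and equals `0` otherwise.  Here `P_φ`
is the subposet of closed elements of `P`. -/
theorem mobius_closure_operator
    {P : Type*} [PartialOrder P] [LocallyFiniteOrder P]
    (φ : ClosureOperator P) (a b : P) (hab : a ≤ b) :
    (∑ x ∈ (Finset.Icc a b).filter (fun x => φ x = b), IncidenceAlgebra.mu ℤ a x) =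
      if h : φ a = a ∧ φ b = b then
        IncidenceAlgebra.mu ℤ (α := {x : P // φ x = x}) ⟨a, h.1⟩ ⟨b, h.2⟩
      else 0 := by
  classical
  by_cases hb : φ b = b
  · -- b is closed
    set Q := {x : P // φ x = x}
    have hφa : φ (φ a) = φ a := φ.idempotent a
    set a₀ : Q := ⟨φ a, hφa⟩ with ha₀
    set bQ : Q := ⟨b, hb⟩ with hbQ
    have ha₀b : a₀ ≤ bQ := by
      show φ a ≤ b
      calc φ a ≤ φ b := φ.monotone hab
      _ = b := hb
    -- the two functions
    set F : Q → ℤ := fun c =>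
      ∑ x ∈ (Finset.Icc a c.1).filter (fun x => φ x = c.1), IncidenceAlgebra.mu ℤ a x with hF
    set G : Q → ℤ := fun c =>
      if h : φ a = a then IncidenceAlgebra.mu ℤ (α := Q) ⟨a, h⟩ c else 0 with hG
    -- key: partial sums of F
    have keyF : ∀ c : Q, a₀ ≤ c →
        ∑ d ∈ Finset.Icc a₀ c, F d = if a = c.1 then 1 else 0 := by
      intro c hc
      have hac : a ≤ c.1 := le_trans (φ.le_closure a) hc
      -- rewrite the Q-sum as a P-sum over closed elements in [a, c.1]
      have himg : (Finset.Icc a c.1).filter (fun y => φ y = y) =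
          (Finset.Icc a₀ c).map (Function.Embedding.subtype _) := by
        ext y
        simp only [Finset.mem_map, Finset.mem_Icc, Function.Embedding.coe_subtype,
          Finset.mem_filter]
        constructor
        · rintro ⟨⟨h1, h2⟩, hy⟩
          refine ⟨⟨y, hy⟩, ⟨?_, h2⟩, rfl⟩
          show φ a ≤ y
          calc φ a ≤ φ y := φ.monotone h1
          _ = y := hy
        · rintro ⟨⟨y, hy⟩, ⟨h1, h2⟩, rfl⟩
          exact ⟨⟨le_trans (φ.le_closure a) h1, h2⟩, hy⟩
      have hmap : ∑ d ∈ Finset.Icc a₀ c, F d =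
          ∑ y ∈ (Finset.Icc a c.1).filter (fun y => φ y = y),
            ∑ x ∈ (Finset.Icc a y).filter (fun x => φ x = y), IncidenceAlgebra.mu ℤ a x := by
        rw [himg, Finset.sum_map]
        apply Finset.sum_congr rfl
        intro d _
        simp [hF, Function.Embedding.coe_subtype]
        exact Finset.sum_congr (Finset.filter_congr_decidable _ _ _) (fun _ _ => rfl)
      rw [hmap]
      -- now fiber decomposition
      have hfiber : ∀ y ∈ (Finset.Icc a c.1).filter (fun y => φ y = y),
          (∑ x ∈ (Finset.Icc a y).filter (fun x => φ x = y), IncidenceAlgebra.mu ℤ a x) =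
            ∑ x ∈ (Finset.Icc a c.1).filter (fun x => φ x = y), IncidenceAlgebra.mu ℤ a x := by
        intro y hy
        congr 1
        rw [Finset.mem_filter, Finset.mem_Icc] at hy
        ext x
        simp only [Finset.mem_filter, Finset.mem_Icc]
        constructor
        · rintro ⟨⟨h1, h2⟩, h3⟩
          exact ⟨⟨h1, le_trans h2 hy.1.2⟩, h3⟩
        · rintro ⟨⟨h1, _⟩, h3⟩
          refine ⟨⟨h1, ?_⟩, h3⟩
          calc x ≤ φ x := φ.le_closure x
          _ = y := h3
      rw [show (∑ y ∈ (Finset.Icc a c.1).filter (fun y => φ y = y),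
            ∑ x ∈ (Finset.Icc a y).filter (fun x => φ x = y), IncidenceAlgebra.mu ℤ a x) =
          ∑ y ∈ (Finset.Icc a c.1).filter (fun y => φ y = y),
            ∑ x ∈ (Finset.Icc a c.1).filter (fun x => φ x = y), IncidenceAlgebra.mu ℤ a x
        from Finset.sum_congr rfl hfiber]
      have := Finset.sum_fiberwise_of_maps_to (g := fun x => φ x)
        (s := Finset.Icc a c.1) (t := (Finset.Icc a c.1).filter (fun y => φ y = y))
        (f := fun x => IncidenceAlgebra.mu ℤ a x) ?_
      · rw [this, IncidenceAlgebra.sum_Icc_mu_right]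
      · intro x hx
        rw [Finset.mem_Icc] at hx
        rw [Finset.mem_filter, Finset.mem_Icc]
        refine ⟨⟨le_trans hx.1 (φ.le_closure x), ?_⟩, φ.idempotent x⟩
        calc φ x ≤ φ c.1 := φ.monotone hx.2
        _ = c.1 := c.2
    -- key: partial sums of G
    have keyG : ∀ c : Q, a₀ ≤ c →
        ∑ d ∈ Finset.Icc a₀ c, G d = if a = c.1 then 1 else 0 := by
      intro c hc
      by_cases ha : φ a = a
      · have haa : a₀ = ⟨a, ha⟩ := Subtype.ext ha
        have : ∑ d ∈ Finset.Icc a₀ c, G d =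
            ∑ d ∈ Finset.Icc a₀ c, IncidenceAlgebra.mu ℤ a₀ d := by
          apply Finset.sum_congr rfl
          intro d _
          rw [hG]
          simp only [dif_pos ha]
          rw [haa]
        rw [this, IncidenceAlgebra.sum_Icc_mu_right]
        congr 1
        simp only [eq_iff_iff]
        constructor
        · intro h; rw [haa] at h; exact congrArg Subtype.val h
        · intro h; rw [haa]; exact Subtype.ext h
      · have hzero : ∑ d ∈ Finset.Icc a₀ c, G d = 0 := by
          apply Finset.sum_eq_zero
          intro d _
          rw [hG]; simp [ha]
        rw [hzero]
        rw [if_neg]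
        intro h
        exact ha (h ▸ c.2)
    have hEq : F bQ = G bQ :=
      eq_of_sum_Icc_eq F G a₀ (fun c hc => (keyF c hc).trans (keyG c hc).symm) bQ ha₀b
    rw [hF] at hEq
    simp only at hEq
    rw [hEq, hG]
    by_cases ha : φ a = a
    · simp only [dif_pos ha, dif_pos (show φ a = a ∧ φ b = b from ⟨ha, hb⟩)]
      convert rfl
    · simp only [dif_neg ha, dif_neg (show ¬(φ a = a ∧ φ b = b) from fun h => ha h.1)]
  · -- b is not closed: the sum is empty
    have hempty : (Finset.Icc a b).filter (fun x => φ x = b) = ∅ := by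
      rw [Finset.filter_eq_empty_iff]
      intro x _ hx
      exact hb (by rw [← hx]; exact φ.idempotent x)
    rw [hempty, Finset.sum_empty, dif_neg (fun h => hb h.2)]
end

section
/- Let P be a locally finite poset with minimum element x, and let P̂ = {y ∈ P : μ_P(x,y) ≠ 0}. Then for all z ∈ P̂, the Möbius function of the subposet P̂ satisfies μ_{P̂}(x,z) = μ_P(x,z). -/
attribute [local instance] Classical.propDecidable

open Finset

private lemma mobius_restrict_aux
    {P : Type*} [PartialOrder P] [OrderBot P] [LocallyFiniteOrder P] :
    ∀ n : ℕ, ∀ (z : P) (hz : IncidenceAlgebra.mu ℤ (⊥ : P) z ≠ 0),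
    (Finset.Ico (⊥ : P) z).card < n →
    IncidenceAlgebra.mu ℤ (α := {y : P // IncidenceAlgebra.mu ℤ (⊥ : P) y ≠ 0})
        ⟨⊥, by simp⟩ ⟨z, hz⟩ =
      IncidenceAlgebra.mu ℤ (⊥ : P) z := by
  intro n
  induction n with
  | zero => intro z hz h; omega
  | succ n ih =>
    intro z hz h
    rcases eq_or_ne z ⊥ with rfl | hzb
    · simp
    have hne : (⟨⊥, by simp⟩ : {y : P // IncidenceAlgebra.mu ℤ (⊥ : P) y ≠ 0}) ≠ ⟨z, hz⟩ := by
      simp [Subtype.ext_iff, Ne.symm hzb]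
    rw [IncidenceAlgebra.mu_eq_neg_sum_Ico_of_ne hne,
        IncidenceAlgebra.mu_eq_neg_sum_Ico_of_ne (Ne.symm hzb)]
    congr 1
    have hIH : ∀ y ∈ (Finset.Ico (⊥ : P) z).subtype
        (fun y => IncidenceAlgebra.mu ℤ (⊥ : P) y ≠ 0),
        IncidenceAlgebra.mu ℤ (α := {y : P // IncidenceAlgebra.mu ℤ (⊥ : P) y ≠ 0})
          ⟨⊥, by simp⟩ y = IncidenceAlgebra.mu ℤ (⊥ : P) y.1 := by
      intro y hy
      rw [Finset.mem_subtype, Finset.mem_Ico] at hy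
      have hsub : Finset.Ico (⊥ : P) y.1 ⊂ Finset.Ico (⊥ : P) z := by
        refine ⟨Finset.Ico_subset_Ico le_rfl hy.2.le, fun hs => ?_⟩
        have := hs (Finset.mem_Ico.mpr ⟨bot_le, hy.2⟩)
        simp [Finset.mem_Ico] at this
      exact ih y.1 y.2 (lt_of_lt_of_le (Finset.card_lt_card hsub) (Nat.lt_succ_iff.mp h))
    rw [Finset.subtype_Ico_eq, Finset.sum_congr rfl hIH,
        Finset.sum_subtype_eq_sum_filter, Finset.sum_filter_of_ne (fun x _ hx => hx)]

/-- let `P` be a locally finite poset with minimum element `⊥`, and let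
`P̂ = {y ∈ P : μ_P(⊥, y) ≠ 0}`.  Then for every `z ∈ P̂`, the Möbius function of the
subposet `P̂` satisfies `μ_{P̂}(⊥, z) = μ_P(⊥, z)`. -/
theorem mobius_restrict_nonzero
    {P : Type*} [PartialOrder P] [OrderBot P] [LocallyFiniteOrder P]
    (z : P) (hz : IncidenceAlgebra.mu ℤ (⊥ : P) z ≠ 0) :
    IncidenceAlgebra.mu ℤ (α := {y : P // IncidenceAlgebra.mu ℤ (⊥ : P) y ≠ 0})
        ⟨⊥, by simp⟩ ⟨z, hz⟩ =
      IncidenceAlgebra.mu ℤ (⊥ : P) z :=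
  mobius_restrict_aux _ z hz (Nat.lt_succ_self _)
end

section
/- For matroids M(S) and N(T) on disjoint ground sets S and T, the rank function of the free product M □ N satisfies ρ_{M□N}(A) = ρ_M(A ∩ S) + ρ_N(A ∩ T) + min{ρ(M) - ρ_M(A ∩ S), |A ∩ T| - ρ_N(A ∩ T)} for all A ⊆ S ∪ T. -/
open Matroid

variable {α : Type*}

/-- The contraction `M / C` of a matroid by a set, defined as the dual of the
deletion (restriction to the complement) of the dual. Its ground set is `M.E \ C`. -/
def Matroid.con (M : Matroid α) (C : Set α) : Matroid α := (M✶ ↾ (M.E \ C))✶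

/-- The rank `ρ(M)` of a matroid (as a value in `ℕ∞`): the common cardinality of its bases. -/
noncomputable def Matroid.erank (M : Matroid α) : ℕ∞ := ⨆ B ∈ {B | M.IsBase B}, B.encard

/-- The rank function `ρ_M(X)` of a matroid: the rank of the restriction to `X`. -/
noncomputable def Matroid.rnk (M : Matroid α) (X : Set α) : ℕ∞ := (M ↾ X).erank

/-- `IsFreeProduct M N P` says that `P` is the free product `M □ N`: its ground set is
`M.E ∪ N.E`, and its bases are exactly the sets `B ⊆ M.E ∪ N.E` of cardinality
`ρ(M) + ρ(N)` such that `B ∩ M.E` is independent in `M` and `B ∩ N.E` spans `N`. -/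
def IsFreeProduct (M N P : Matroid α) : Prop :=
  P.E = M.E ∪ N.E ∧ ∀ B : Set α,
    (P.IsBase B ↔ B ⊆ M.E ∪ N.E ∧ B.encard = M.erank + N.erank ∧
      M.Indep (B ∩ M.E) ∧ N.Spanning (B ∩ N.E))

/-- The rank-preserving weak order on matroids: `M ≤ N` iff `M` and `N` have the same
ground set and every base of `M` is a base of `N`. -/
def weakLE (M N : Matroid α) : Prop := M.E = N.E ∧ ∀ B, M.IsBase B → N.IsBase B

/-! ### Auxiliary rank API -/

open Set

lemma erank_eq_encard {M : Matroid α} {B : Set α} (hB : M.IsBase B) :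
    M.erank = B.encard := by
  refine le_antisymm (iSup₂_le fun B' hB' => (hB'.encard_eq_encard_of_isBase hB).le) ?_
  exact le_iSup₂ (f := fun B _ => B.encard) B hB

lemma rnk_eq_encard {M : Matroid α} {I X : Set α} (hI : M.IsBasis' I X) :
    M.rnk X = I.encard :=
  erank_eq_encard (isBase_restrict_iff'.2 hI)

lemma rnk_indep {M : Matroid α} {I : Set α} (hI : M.Indep I) : M.rnk I = I.encard :=
  rnk_eq_encard hI.isBasis_self.isBasis'

lemma rnk_mono (M : Matroid α) {X Y : Set α} (hXY : X ⊆ Y) : M.rnk X ≤ M.rnk Y := by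
  obtain ⟨I, hI⟩ := M.exists_isBasis' X
  obtain ⟨J, hJ, hIJ⟩ := hI.indep.subset_isBasis'_of_subset (hI.subset.trans hXY)
  rw [rnk_eq_encard hI, rnk_eq_encard hJ]
  exact encard_mono hIJ

lemma rnk_le_encard (M : Matroid α) (X : Set α) : M.rnk X ≤ X.encard := by
  obtain ⟨I, hI⟩ := M.exists_isBasis' X
  rw [rnk_eq_encard hI]; exact encard_mono hI.subset

lemma rnk_le_erank (M : Matroid α) (X : Set α) : M.rnk X ≤ M.erank := by
  obtain ⟨I, hI⟩ := M.exists_isBasis' X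
  obtain ⟨B, hB, hIB⟩ := hI.indep.exists_isBase_superset
  rw [rnk_eq_encard hI, erank_eq_encard hB]; exact encard_mono hIB

lemma rnk_spanning {M : Matroid α} {X : Set α} (h : M.Spanning X) : M.rnk X = M.erank := by
  obtain ⟨B, hB, hBX⟩ := h.exists_isBase_subset
  refine le_antisymm (rnk_le_erank M X) ?_
  rw [erank_eq_encard hB, ← rnk_indep hB.indep]
  exact rnk_mono M hBX

lemma erank_ne_top {M : Matroid α} (hM : M.E.Finite) : M.erank ≠ ⊤ := by
  obtain ⟨B, hB⟩ := M.exists_isBase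
  rw [erank_eq_encard hB]
  exact (hM.subset hB.subset_ground).encard_lt_top.ne

lemma rnk_ne_top {M : Matroid α} {X : Set α} (hX : X.Finite) : M.rnk X ≠ ⊤ :=
  ((rnk_le_encard M X).trans_lt hX.encard_lt_top).ne

/-- Nullity is monotone: for `X ⊆ Y ⊆ M.E`, `|X| + rnk Y ≤ |Y| + rnk X`. -/
lemma encard_add_rnk_le {M : Matroid α} {X Y : Set α} (hXY : X ⊆ Y) (hY : Y ⊆ M.E) :
    X.encard + M.rnk Y ≤ Y.encard + M.rnk X := by
  obtain ⟨I, hI⟩ := M.exists_isBasis X (hXY.trans hY)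
  obtain ⟨J, hJ, hIJ⟩ := hI.indep.subset_isBasis_of_subset (hI.subset.trans hXY) hY
  have hJX : J ∩ X = I :=
    (hI.eq_of_subset_indep (hJ.indep.subset inter_subset_left)
      (subset_inter hIJ hI.subset) inter_subset_right).symm
  rw [rnk_eq_encard hI.isBasis', rnk_eq_encard hJ.isBasis']
  have h1 : (J \ X).encard + (J ∩ X).encard = J.encard := encard_diff_add_encard_inter J X
  have h2 : (Y \ X).encard + X.encard = Y.encard := encard_diff_add_encard_of_subset hXY
  have h3 : (J \ X).encard ≤ (Y \ X).encard := encard_mono (diff_subset_diff_left hJ.subset)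
  calc X.encard + J.encard = (J \ X).encard + (I.encard + X.encard) := by
        rw [← h1, hJX]; ring
    _ ≤ (Y \ X).encard + (I.encard + X.encard) := by gcongr
    _ = Y.encard + I.encard := by rw [← h2]; ring

/-- Characterisation of the independent sets of the free product: `I` is independent iff
`I ∩ M.E` is independent in `M` and the nullity of `I ∩ N.E` in `N` is at most the
corank of `I ∩ M.E` in `M` (written additively to avoid truncated subtraction). -/
lemma freeProduct_indep_iff {M N P : Matroid α} (hM : M.E.Finite) (hN : N.E.Finite)
    (hdisj : Disjoint M.E N.E) (hP : IsFreeProduct M N P) (I : Set α) :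
    P.Indep I ↔ I ⊆ M.E ∪ N.E ∧ M.Indep (I ∩ M.E) ∧
      (I ∩ N.E).encard + (I ∩ M.E).encard ≤ M.erank + N.rnk (I ∩ N.E) := by
  constructor
  · rintro hI
    obtain ⟨B, hB, hIB⟩ := indep_iff.1 hI
    obtain ⟨hBsub, hBcard, hBindep, hBspan⟩ := (hP.2 B).1 hB
    have hIsub : I ⊆ M.E ∪ N.E := hIB.trans hBsub
    refine ⟨hIsub, hBindep.subset (inter_subset_inter_left _ hIB), ?_⟩
    have hBS : (B ∩ M.E).Finite := hM.inter_of_right B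
    have hBT : (B ∩ N.E).Finite := hN.inter_of_right B
    have hIS : (I ∩ M.E).Finite := hM.inter_of_right I
    have hIT : (I ∩ N.E).Finite := hN.inter_of_right I
    have hBsplit : (B ∩ M.E).encard + (B ∩ N.E).encard = B.encard := by
      rw [← encard_union_eq (hdisj.mono inter_subset_right inter_subset_right),
        ← inter_union_distrib_left, inter_eq_self_of_subset_left hBsub]
    have hspan : N.rnk (B ∩ N.E) = N.erank := rnk_spanning hBspan
    have hnull : (I ∩ N.E).encard + N.rnk (B ∩ N.E) ≤ (B ∩ N.E).encard + N.rnk (I ∩ N.E) :=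
      encard_add_rnk_le (inter_subset_inter_left _ hIB) inter_subset_right
    have hIsS : (I ∩ M.E).encard ≤ (B ∩ M.E).encard :=
      encard_mono (inter_subset_inter_left _ hIB)
    lift M.erank to ℕ using erank_ne_top hM with r hr
    lift N.erank to ℕ using erank_ne_top hN with s hs
    lift (B ∩ M.E).encard to ℕ using hBS.encard_lt_top.ne with bS
    lift (B ∩ N.E).encard to ℕ using hBT.encard_lt_top.ne with bT
    lift (I ∩ M.E).encard to ℕ using hIS.encard_lt_top.ne with iS
    lift (I ∩ N.E).encard to ℕ using hIT.encard_lt_top.ne with iT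
    lift N.rnk (I ∩ N.E) to ℕ using rnk_ne_top hIT with nI
    rw [hspan] at hnull
    rw [hBcard] at hBsplit
    have h1 : iT + s ≤ bT + nI := by exact_mod_cast hnull
    have h2 : bS + bT = r + s := by exact_mod_cast hBsplit
    have h3 : iS ≤ bS := by exact_mod_cast hIsS
    exact_mod_cast (by exact_mod_cast (by omega : iT + iS ≤ r + nI) :
      (iT + iS : ℕ∞) ≤ r + nI)
  · rintro ⟨hIsub, hJindep, hcard⟩
    set J := I ∩ M.E with hJdef
    set K := I ∩ N.E with hKdef
    have hKsub : K ⊆ N.E := inter_subset_right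
    obtain ⟨K', hK'⟩ := N.exists_isBasis' K
    obtain ⟨BN, hBN, hK'BN⟩ := hK'.indep.exists_isBase_superset
    obtain ⟨BM, hBM, hJBM⟩ := hJindep.exists_isBase_superset
    have hKfin : K.Finite := hN.inter_of_right I
    have hK'fin : K'.Finite := hKfin.subset hK'.subset
    have hJfin : J.Finite := hM.inter_of_right I
    have hBNfin : BN.Finite := hN.subset hBN.subset_ground
    obtain ⟨r, hr⟩ : ∃ r : ℕ, M.erank = r := ⟨_, (ENat.coe_toNat (erank_ne_top hM)).symm⟩
    obtain ⟨s, hs⟩ : ∃ s : ℕ, N.erank = s := ⟨_, (ENat.coe_toNat (erank_ne_top hN)).symm⟩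
    obtain ⟨b, hb⟩ : ∃ b : ℕ, K'.encard = b :=
      ⟨_, (ENat.coe_toNat hK'fin.encard_lt_top.ne).symm⟩
    obtain ⟨kk, hkk⟩ : ∃ k : ℕ, K.encard = k :=
      ⟨_, (ENat.coe_toNat hKfin.encard_lt_top.ne).symm⟩
    obtain ⟨j, hj⟩ : ∃ j : ℕ, J.encard = j :=
      ⟨_, (ENat.coe_toNat hJfin.encard_lt_top.ne).symm⟩
    have hrnkK : N.rnk K = b := by rw [rnk_eq_encard hK', hb]
    have hbkk : b ≤ kk := by
      have := encard_mono hK'.subset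
      rw [hb, hkk] at this; exact_mod_cast this
    have hkey : kk + j ≤ r + b := by
      rw [hkk, hj, hr, hrnkK] at hcard; exact_mod_cast hcard
    have hBMcard : BM.encard = r := by rw [← erank_eq_encard hBM, hr]
    obtain ⟨J', hJJ', hJ'BM, hJ'card⟩ :=
      exists_superset_subset_encard_eq (k := (r - (kk - b) : ℕ)) hJBM
        (by rw [hj]; exact_mod_cast (by omega : j ≤ r - (kk - b)))
        (by rw [hBMcard]; exact_mod_cast (by omega : r - (kk - b) ≤ r))
    have hJ'S : J' ⊆ M.E := hJ'BM.trans hBM.subset_ground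
    have hKBNsub : K ∪ BN ⊆ N.E := union_subset hKsub hBN.subset_ground
    set B := J' ∪ (K ∪ BN) with hBdef
    have hBS : B ∩ M.E = J' := by
      rw [hBdef, union_inter_distrib_right, inter_eq_self_of_subset_left hJ'S,
        (hdisj.symm.mono_left hKBNsub).inter_eq, union_empty]
    have hBT : B ∩ N.E = K ∪ BN := by
      rw [hBdef, union_inter_distrib_right, (hdisj.mono_left hJ'S).inter_eq,
        inter_eq_self_of_subset_left hKBNsub, empty_union]
    have hKBN : (K ∩ BN).encard = b := by
      refine le_antisymm ?_ (hb ▸ encard_mono (subset_inter hK'.subset hK'BN))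
      rw [← rnk_indep (hBN.indep.subset inter_subset_right), ← hrnkK]
      exact rnk_mono N inter_subset_left
    have hBNcard : BN.encard = s := by rw [← erank_eq_encard hBN, hs]
    obtain ⟨u, hu⟩ : ∃ u : ℕ, (K ∪ BN).encard = u :=
      ⟨_, (ENat.coe_toNat (hKfin.union hBNfin).encard_lt_top.ne).symm⟩
    have hbs : b ≤ s := by
      have := encard_mono hK'BN
      rw [hb, hBNcard] at this; exact_mod_cast this
    have huval : u + b = kk + s := by
      have := encard_union_add_encard_inter K BN
      rw [hu, hKBN, hkk, hBNcard] at this; exact_mod_cast this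
    have hBcard : B.encard = M.erank + N.erank := by
      rw [hBdef, encard_union_eq (hdisj.mono hJ'S hKBNsub), hJ'card, hu, hr, hs]
      exact_mod_cast (by omega : (r - (kk - b)) + u = r + s)
    have hBbase : P.IsBase B := (hP.2 B).2
      ⟨union_subset (hJ'S.trans subset_union_left) (hKBNsub.trans subset_union_right),
        hBcard, hBS ▸ hBM.indep.subset hJ'BM,
        hBT ▸ hBN.spanning.superset subset_union_right hKBNsub⟩
    refine indep_iff.2 ⟨B, hBbase, fun x hx => ?_⟩
    rcases hIsub hx with h | h
    · exact Or.inl (hJJ' ⟨hx, h⟩)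
    · exact Or.inr (Or.inl ⟨hx, h⟩)

/-- The rank of a set in the free product, in `min` form. -/
lemma freeProduct_rnk_eq_min {M N P : Matroid α} (hM : M.E.Finite) (hN : N.E.Finite)
    (hdisj : Disjoint M.E N.E) (hP : IsFreeProduct M N P)
    {A : Set α} (hA : A ⊆ M.E ∪ N.E) :
    P.rnk A = min (M.erank + N.rnk (A ∩ N.E)) (M.rnk (A ∩ M.E) + (A ∩ N.E).encard) := by
  refine le_antisymm ?_ ?_
  · obtain ⟨I, hI⟩ := P.exists_isBasis' A
    have hPI := hI.indep
    have hIA := hI.subset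
    obtain ⟨hIsub, hIS, hineq⟩ := (freeProduct_indep_iff hM hN hdisj hP I).1 hPI
    have hsplit : (I ∩ M.E).encard + (I ∩ N.E).encard = I.encard := by
      rw [← encard_union_eq (hdisj.mono inter_subset_right inter_subset_right),
        ← inter_union_distrib_left, inter_eq_self_of_subset_left hIsub]
    rw [rnk_eq_encard hI, ← hsplit]
    refine le_min ?_ ?_
    · rw [add_comm]
      exact hineq.trans (add_le_add le_rfl (rnk_mono N (inter_subset_inter_left _ hIA)))
    · exact add_le_add
        (by rw [← rnk_indep hIS]; exact rnk_mono M (inter_subset_inter_left _ hIA))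
        (encard_mono (inter_subset_inter_left _ hIA))
  · obtain ⟨J, hJ⟩ := M.exists_isBasis' (A ∩ M.E)
    have hJS : J ⊆ M.E := hJ.indep.subset_ground
    have hJA : J ⊆ A := hJ.subset.trans inter_subset_left
    have haJ : M.rnk (A ∩ M.E) = J.encard := rnk_eq_encard hJ
    rcases le_total (M.rnk (A ∩ M.E) + (A ∩ N.E).encard) (M.erank + N.rnk (A ∩ N.E)) with h | h
    · rw [min_eq_right h]
      set I₀ := J ∪ (A ∩ N.E) with hI₀
      have hI₀S : I₀ ∩ M.E = J := by
        rw [hI₀, union_inter_distrib_right, inter_eq_self_of_subset_left hJS,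
          (hdisj.symm.mono_left inter_subset_right).inter_eq, union_empty]
      have hI₀T : I₀ ∩ N.E = A ∩ N.E := by
        rw [hI₀, union_inter_distrib_right, (hdisj.mono_left hJS).inter_eq,
          inter_eq_self_of_subset_left inter_subset_right, empty_union]
      have hind : P.Indep I₀ := (freeProduct_indep_iff hM hN hdisj hP I₀).2
        ⟨union_subset (hJS.trans subset_union_left)
          (inter_subset_right.trans subset_union_right),
          hI₀S ▸ hJ.indep, by rw [hI₀S, hI₀T, add_comm, ← haJ]; exact h⟩
      have hle : P.rnk I₀ ≤ P.rnk A := rnk_mono P (union_subset hJA inter_subset_left)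
      rw [rnk_indep hind] at hle
      refine le_trans ?_ hle
      rw [hI₀, encard_union_eq (hdisj.mono hJS inter_subset_right), haJ]
    · rw [min_eq_left h]
      obtain ⟨K, hK⟩ := N.exists_isBasis' (A ∩ N.E)
      have hbK : N.rnk (A ∩ N.E) = K.encard := rnk_eq_encard hK
      have hASfin : (A ∩ M.E).Finite := hM.inter_of_right A
      have hATfin : (A ∩ N.E).Finite := hN.inter_of_right A
      obtain ⟨r, hr⟩ : ∃ r : ℕ, M.erank = r := ⟨_, (ENat.coe_toNat (erank_ne_top hM)).symm⟩
      obtain ⟨a, ha⟩ : ∃ a : ℕ, J.encard = a :=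
        ⟨_, (ENat.coe_toNat (hASfin.subset hJ.subset).encard_lt_top.ne).symm⟩
      obtain ⟨b, hb⟩ : ∃ b : ℕ, K.encard = b :=
        ⟨_, (ENat.coe_toNat (hATfin.subset hK.subset).encard_lt_top.ne).symm⟩
      obtain ⟨k, hk⟩ : ∃ k : ℕ, (A ∩ N.E).encard = k :=
        ⟨_, (ENat.coe_toNat hATfin.encard_lt_top.ne).symm⟩
      obtain ⟨d, hd⟩ : ∃ d : ℕ, ((A ∩ N.E) \ K).encard = d :=
        ⟨_, (ENat.coe_toNat (hATfin.diff (t := K)).encard_lt_top.ne).symm⟩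
      have hdbk : d + b = k := by
        have := encard_diff_add_encard_of_subset hK.subset
        rw [hd, hb, hk] at this; exact_mod_cast this
      have har : a ≤ r := by
        have := rnk_le_erank M (A ∩ M.E)
        rw [haJ, ha, hr] at this; exact_mod_cast this
      have hkey : r + b ≤ a + k := by
        rw [haJ, ha, hk, hr, hbK, hb] at h; exact_mod_cast h
      obtain ⟨X, hXsub, hXcard⟩ := exists_subset_encard_eq
        (k := ((r - a : ℕ) : ℕ∞)) (s := (A ∩ N.E) \ K)
        (by rw [hd]; exact_mod_cast (by omega : r - a ≤ d))
      have hKX : Disjoint K X := disjoint_sdiff_right.mono_right hXsub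
      have hKXsub : K ∪ X ⊆ A ∩ N.E := union_subset hK.subset (hXsub.trans diff_subset)
      have hKXT : K ∪ X ⊆ N.E := hKXsub.trans inter_subset_right
      have hrnkKX : N.rnk (K ∪ X) = b := by
        refine le_antisymm ?_ ?_
        · rw [← hb, ← hbK]; exact rnk_mono N hKXsub
        · rw [← hb, ← rnk_indep hK.indep]; exact rnk_mono N subset_union_left
      have hKXcard : (K ∪ X).encard = ((b + (r - a) : ℕ) : ℕ∞) := by
        rw [encard_union_eq hKX, hb, hXcard]; push_cast; ring
      set I₀ := J ∪ (K ∪ X) with hI₀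
      have hI₀S : I₀ ∩ M.E = J := by
        rw [hI₀, union_inter_distrib_right, inter_eq_self_of_subset_left hJS,
          (hdisj.symm.mono_left hKXT).inter_eq, union_empty]
      have hI₀T : I₀ ∩ N.E = K ∪ X := by
        rw [hI₀, union_inter_distrib_right, (hdisj.mono_left hJS).inter_eq,
          inter_eq_self_of_subset_left hKXT, empty_union]
      have hind : P.Indep I₀ := (freeProduct_indep_iff hM hN hdisj hP I₀).2
        ⟨union_subset (hJS.trans subset_union_left) (hKXT.trans subset_union_right),
          hI₀S ▸ hJ.indep, by
            rw [hI₀S, hI₀T, hrnkKX, hKXcard, ha, hr]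
            exact_mod_cast (by omega : (b + (r - a)) + a ≤ r + b)⟩
      have hle : P.rnk I₀ ≤ P.rnk A :=
        rnk_mono P (union_subset hJA (hKXsub.trans inter_subset_left))
      rw [rnk_indep hind] at hle
      refine le_trans ?_ hle
      rw [hI₀, encard_union_eq (hdisj.mono hJS hKXT), hKXcard, hr, hbK, hb, ha]
      exact_mod_cast (by omega : r + b ≤ a + (b + (r - a)))

/-- rank function of the free product.  For matroids `M(S)`, `N(T)` on disjoint
ground sets and any `A ⊆ S ∪ T`, we have
`ρ_{M□N}(A) = ρ_M(A ∩ S) + ρ_N(A ∩ T) + min (ρ(M) - ρ_M(A ∩ S)) (|A ∩ T| - ρ_N(A ∩ T))`. -/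
theorem freeProduct_rank
    (M N P : Matroid α) (hM : M.E.Finite) (hN : N.E.Finite)
    (hdisj : Disjoint M.E N.E) (hP : IsFreeProduct M N P)
    (A : Set α) (hA : A ⊆ M.E ∪ N.E) :
    P.rnk A = M.rnk (A ∩ M.E) + N.rnk (A ∩ N.E) +
      min (M.erank - M.rnk (A ∩ M.E)) ((A ∩ N.E).encard - N.rnk (A ∩ N.E)) := by
  have ha : M.rnk (A ∩ M.E) ≤ M.erank := rnk_le_erank M _
  have hb : N.rnk (A ∩ N.E) ≤ (A ∩ N.E).encard := rnk_le_encard N _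
  rw [freeProduct_rnk_eq_min hM hN hdisj hP hA, ← min_add_add_left,
    add_right_comm (M.rnk (A ∩ M.E)) (N.rnk (A ∩ N.E)),
    add_tsub_cancel_of_le ha, add_assoc (M.rnk (A ∩ M.E)),
    add_tsub_cancel_of_le hb]
end

section
/- Let S = U + V be a partition of a finite set into disjoint subsets. For matroids P on U, Q on V, and M on S, one has φ_U(M) = P □ Q if and only if P ⊕ Q ≤ M ≤ P □ Q in the rank-preserving weak order on matroids on S, where φ_U(M) = M|U □ M/U. -/
open Matroid Set

variable {α : Type*}

namespace Matroid

variable {M : Matroid α} {U B B₁ B₂ I X : Set α}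

@[simp] lemma con_ground (M : Matroid α) (U : Set α) : (M.con U).E = M.E \ U := rfl

lemma erank_eq_encard (hB : M.IsBase B) : M.erank = B.encard := by
  unfold Matroid.erank
  refine le_antisymm (iSup₂_le fun B' hB' => (hB'.encard_eq_encard_of_isBase hB).le) ?_
  exact le_iSup₂ (f := fun (B : Set α) (_ : B ∈ {B | M.IsBase B}) => B.encard) B hB

lemma con_spanning_iff (hU : U ⊆ M.E) (hX : X ⊆ M.E \ U) :
    (M.con U).Spanning X ↔ M.Spanning (U ∪ X) := by
  have hXE : X ⊆ (M.con U).E := hX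
  have hcompl : M.E \ ((M.E \ U) \ X) = U ∪ X := by
    ext x
    constructor
    · rintro ⟨hxE, hx⟩
      by_cases hxU : x ∈ U
      · exact Or.inl hxU
      · exact Or.inr (by_contra fun hxX => hx ⟨⟨hxE, hxU⟩, hxX⟩)
    · rintro (hx | hx)
      · exact ⟨hU hx, fun h => h.1.2 hx⟩
      · exact ⟨(hX hx).1, fun h => h.2 hx⟩
  rw [spanning_iff_compl_coindep hXE]
  have hdd : (M.con U)✶ = M✶ ↾ (M.E \ U) := dual_dual _
  rw [Matroid.Coindep, hdd, restrict_indep_iff, ← Matroid.Coindep]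
  simp only [con_ground]
  rw [coindep_iff_compl_spanning (diff_subset.trans diff_subset), hcompl]
  exact ⟨fun h => h.1, fun h => ⟨h, diff_subset⟩⟩

lemma spanning_subset_base_eq {N : Matroid α} (hX : N.Spanning X) (hB : N.IsBase B)
    (hXB : X ⊆ B) : X = B := by
  obtain ⟨B', hB', hB'X⟩ := hX.exists_isBase_subset
  obtain rfl := hB'.eq_of_subset_isBase hB (hB'X.trans hXB)
  exact hXB.antisymm hB'X

lemma base_union_of_bases (hfin : M.E.Finite) (hU : U ⊆ M.E)
    (h1 : (M ↾ U).IsBase B₁) (h2 : (M.con U).IsBase B₂) : M.IsBase (B₁ ∪ B₂) := by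
  have hB1 : M.IsBasis B₁ U := (isBase_restrict_iff hU).mp h1
  have hB₁U : B₁ ⊆ U := hB1.subset
  have hB₂V : B₂ ⊆ M.E \ U := h2.subset_ground
  have hBE : B₁ ∪ B₂ ⊆ M.E := union_subset (hB₁U.trans hU) (hB₂V.trans diff_subset)
  have hsp2 : M.Spanning (U ∪ B₂) := (con_spanning_iff hU hB₂V).mp h2.spanning
  have hsp : M.Spanning (B₁ ∪ B₂) := by
    rw [spanning_iff_closure_eq hBE, ← closure_union_closure_left_eq,
      hB1.closure_eq_closure, closure_union_closure_left_eq]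
    exact hsp2.closure_eq
  obtain ⟨B, hB, hBss⟩ := hsp.exists_isBase_subset
  have hBU : B \ U ⊆ B₂ := fun x hx => ((hBss hx.1).elim (fun h => absurd (hB₁U h) hx.2) id)
  have hBV : B \ U = B₂ := by
    refine spanning_subset_base_eq ?_ h2 hBU
    rw [con_spanning_iff hU (hBU.trans hB₂V), union_diff_self]
    exact hB.spanning.superset subset_union_right (union_subset hU hB.subset_ground)
  obtain ⟨B', hB', hB₁B'⟩ := hB1.indep.exists_isBase_superset
  have hB'U : B' ∩ U = B₁ :=
    (hB1.eq_of_subset_indep (hB'.indep.inter_right U)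
      (subset_inter hB₁B' hB₁U) inter_subset_right).symm
  have hB'sp : (M.con U).Spanning (B' \ U) := by
    rw [con_spanning_iff hU (diff_subset_diff_left hB'.subset_ground), union_diff_self]
    exact hB'.spanning.superset subset_union_right (union_subset hU hB'.subset_ground)
  obtain ⟨B₂', hB₂', hB₂'ss⟩ := hB'sp.exists_isBase_subset
  have hcard2 : B₂.encard ≤ (B' \ U).encard :=
    (hB₂'.encard_eq_encard_of_isBase h2).symm.le.trans (encard_le_encard hB₂'ss)
  have hsplit : ∀ Y : Set α, (Y \ U).encard + (Y ∩ U).encard = Y.encard :=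
    fun Y => encard_diff_add_encard_inter Y U
  have hBB' : B.encard = B'.encard := hB.encard_eq_encard_of_isBase hB'
  have hle : B₁.encard ≤ (B ∩ U).encard := by
    have hfinBU : (B \ U).encard ≠ ⊤ := by
      rw [encard_ne_top_iff]; exact hfin.subset (diff_subset.trans hB.subset_ground)
    have h1' : (B \ U).encard + B₁.encard ≤ (B \ U).encard + (B ∩ U).encard := by
      rw [hsplit B, hBB', ← hsplit B', hB'U, hBV]
      exact add_le_add_left hcard2 _
    exact (WithTop.add_le_add_iff_left hfinBU).mp h1'
  have hBinter : B ∩ U = B₁ := by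
    refine (hfin.subset (hB₁U.trans hU)).eq_of_subset_of_encard_le' ?_ hle
    exact fun x hx => (hBss hx.1).elim id (fun h => absurd hx.2 (hB₂V h).2)
  have hBeq : B = B₁ ∪ B₂ := by
    rw [← hBinter, ← hBV]; exact (inter_union_diff B U).symm
  rwa [← hBeq]

lemma erank_restrict_add_erank_con (hfin : M.E.Finite) (hU : U ⊆ M.E) :
    (M ↾ U).erank + (M.con U).erank = M.erank := by
  obtain ⟨B₁, h1⟩ := (M ↾ U).exists_isBase
  obtain ⟨B₂, h2⟩ := (M.con U).exists_isBase
  have hd : Disjoint B₁ B₂ :=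
    disjoint_sdiff_right.mono h1.subset_ground h2.subset_ground
  rw [erank_eq_encard h1, erank_eq_encard h2,
    erank_eq_encard (base_union_of_bases hfin hU h1 h2), encard_union_eq hd]

lemma eq_of_spanning_iff_spanning_forall {N₁ N₂ : Matroid α} (hE : N₁.E = N₂.E)
    (h : ∀ X, X ⊆ N₁.E → (N₁.Spanning X ↔ N₂.Spanning X)) : N₁ = N₂ := by
  rw [← dual_inj]
  refine ext_indep (by simpa using hE) fun I hI => ?_
  have hI' : I ⊆ N₁.E := hI
  rw [← coindep_def, ← coindep_def, coindep_iff_compl_spanning hI',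
    coindep_iff_compl_spanning (hE ▸ hI'), ← hE,
    h _ diff_subset]

end Matroid

section FP

variable {P Q P' Q' M F : Matroid α} {U V B B₁ B₂ I X : Set α}

lemma union_inter_left_eq (h1 : B₁ ⊆ P.E) (hd : Disjoint B₂ P.E) :
    (B₁ ∪ B₂) ∩ P.E = B₁ := by
  rw [union_inter_distrib_right, inter_eq_self_of_subset_left h1, hd.inter_eq, union_empty]

lemma union_inter_right_eq (h2 : B₂ ⊆ Q.E) (hd : Disjoint B₁ Q.E) :
    (B₁ ∪ B₂) ∩ Q.E = B₂ := by
  rw [union_inter_distrib_right, inter_eq_self_of_subset_left h2, hd.inter_eq, empty_union]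

lemma indep_spanning_of_fp_imp
    (hE1 : P.E = P'.E) (hE2 : Q.E = Q'.E) (hd : Disjoint P.E Q.E)
    (h : ∀ B : Set α, (B ⊆ P.E ∪ Q.E ∧ B.encard = P.erank + Q.erank ∧
      P.Indep (B ∩ P.E) ∧ Q.Spanning (B ∩ Q.E)) →
      (B ⊆ P'.E ∪ Q'.E ∧ B.encard = P'.erank + Q'.erank ∧
      P'.Indep (B ∩ P'.E) ∧ Q'.Spanning (B ∩ Q'.E))) :
    (∀ I, I ⊆ P.E → P.Indep I → P'.Indep I) ∧
      (∀ X, X ⊆ Q.E → Q.Spanning X → Q'.Spanning X) := by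
  have fp : ∀ B₁ B₂, P.IsBase B₁ → Q.IsBase B₂ → P'.Indep B₁ ∧ Q'.Spanning B₂ := by
    intro B₁ B₂ h1 h2
    have hdB : Disjoint B₁ B₂ := hd.mono h1.subset_ground h2.subset_ground
    have hi1 : (B₁ ∪ B₂) ∩ P.E = B₁ :=
      union_inter_left_eq h1.subset_ground (hd.symm.mono_left h2.subset_ground)
    have hi2 : (B₁ ∪ B₂) ∩ Q.E = B₂ :=
      union_inter_right_eq h2.subset_ground (hd.mono_left h1.subset_ground)
    obtain ⟨-, -, hi, hs⟩ := h (B₁ ∪ B₂)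
      ⟨union_subset (h1.subset_ground.trans subset_union_left)
        (h2.subset_ground.trans subset_union_right),
      by rw [encard_union_eq hdB, Matroid.erank_eq_encard h1, Matroid.erank_eq_encard h2],
      by rw [hi1]; exact h1.indep,
      by rw [hi2]; exact h2.spanning⟩
    rw [← hE1, hi1] at hi
    rw [← hE2, hi2] at hs
    exact ⟨hi, hs⟩
  constructor
  · intro I _ hIindep
    obtain ⟨B₁, h1, hIB₁⟩ := hIindep.exists_isBase_superset
    obtain ⟨B₂, h2⟩ := Q.exists_isBase
    exact ((fp B₁ B₂ h1 h2).1).subset hIB₁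
  · intro X hX hXsp
    obtain ⟨B₂, h2, hB₂X⟩ := hXsp.exists_isBase_subset
    obtain ⟨B₁, h1⟩ := P.exists_isBase
    exact ((fp B₁ B₂ h1 h2).2).superset hB₂X (hE2 ▸ hX)

lemma fp_factors_eq (hE1 : P.E = P'.E) (hE2 : Q.E = Q'.E) (hd : Disjoint P.E Q.E)
    (h : ∀ B : Set α, (B ⊆ P.E ∪ Q.E ∧ B.encard = P.erank + Q.erank ∧
      P.Indep (B ∩ P.E) ∧ Q.Spanning (B ∩ Q.E)) ↔
      (B ⊆ P'.E ∪ Q'.E ∧ B.encard = P'.erank + Q'.erank ∧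
      P'.Indep (B ∩ P'.E) ∧ Q'.Spanning (B ∩ Q'.E))) : P = P' ∧ Q = Q' := by
  have hd' : Disjoint P'.E Q'.E := by rw [← hE1, ← hE2]; exact hd
  have h₁ := indep_spanning_of_fp_imp hE1 hE2 hd (fun B => (h B).mp)
  have h₂ := indep_spanning_of_fp_imp hE1.symm hE2.symm hd' (fun B => (h B).mpr)
  constructor
  · exact Matroid.ext_indep hE1 fun I hI =>
      ⟨h₁.1 I hI, fun h' => h₂.1 I (hE1 ▸ hI) h'⟩
  · exact Matroid.eq_of_spanning_iff_spanning_forall hE2 fun X hX =>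
      ⟨h₁.2 X hX, fun h' => h₂.2 X (hE2 ▸ hX) h'⟩

lemma rhs_of_fp (hfin : M.E.Finite) (hU : U ⊆ M.E)
    (h : IsFreeProduct (M ↾ U) (M.con U) F)
    (hdis : Disjoint (M ↾ U).E (M.con U).E) :
    weakLE ((M ↾ U).disjointSum (M.con U) hdis) M ∧ weakLE M F := by
  have hgr : (M ↾ U).E ∪ (M.con U).E = M.E := by
    rw [Matroid.restrict_ground_eq, Matroid.con_ground, union_diff_cancel hU]
  constructor
  · refine ⟨by rw [Matroid.disjointSum_ground_eq, hgr], fun B hB => ?_⟩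
    rw [Matroid.disjointSum_isBase_iff] at hB
    have hbase := Matroid.base_union_of_bases hfin hU hB.1 hB.2.1
    have hBeq : B ∩ (M ↾ U).E ∪ B ∩ (M.con U).E = B := by
      rw [← inter_union_distrib_left, inter_eq_self_of_subset_left hB.2.2]
    rwa [hBeq] at hbase
  · refine ⟨by rw [h.1, hgr], fun B hB => ?_⟩
    rw [h.2 B]
    refine ⟨by rw [hgr]; exact hB.subset_ground, ?_, ?_, ?_⟩
    · rw [Matroid.erank_restrict_add_erank_con hfin hU]
      exact (Matroid.erank_eq_encard hB).symm
    · rw [Matroid.restrict_ground_eq, Matroid.restrict_indep_iff]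
      exact ⟨hB.indep.inter_right U, inter_subset_right⟩
    · rw [Matroid.con_ground, Matroid.con_spanning_iff hU inter_subset_right]
      refine hB.spanning.superset (fun x hx => ?_)
        (union_subset hU (inter_subset_right.trans diff_subset))
      by_cases hxU : x ∈ U
      · exact Or.inl hxU
      · exact Or.inr ⟨hx, hB.subset_ground hx, hxU⟩
end FP

/-- let `S = U + V` be a partition of a finite set.  For matroids `P` on `U`,
`Q` on `V` and `M` on `S`, one has `φ_U(M) = P □ Q` if and only if
`P ⊕ Q ≤ M ≤ P □ Q` in the rank-preserving weak order, where `φ_U(M) = M|U □ M/U`. -/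
theorem phiU_eq_iff_interval (S U V : Set α) (hS : S.Finite) (hUV : U ∪ V = S)
    (hd : Disjoint U V) (P Q M : Matroid α) (hP : P.E = U) (hQ : Q.E = V) (hM : M.E = S)
    (hdPQ : Disjoint P.E Q.E) (F : Matroid α) (hF : IsFreeProduct P Q F) :
    IsFreeProduct (M ↾ U) (M.con U) F ↔
      (weakLE (P.disjointSum Q hdPQ) M ∧ weakLE M F) := by
  subst hM
  have hfin : M.E.Finite := hS
  have hU : U ⊆ M.E := by rw [← hUV]; exact subset_union_left
  have hV : V = M.E \ U := by
    rw [← hUV, union_diff_left, hd.symm.sdiff_eq_left]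
  have hE1 : P.E = (M ↾ U).E := by rw [Matroid.restrict_ground_eq, hP]
  have hE2 : Q.E = (M.con U).E := by rw [Matroid.con_ground, hQ, hV]
  constructor
  · intro h
    obtain ⟨hPeq, hQeq⟩ := fp_factors_eq hE1 hE2 hdPQ
      (fun B => (hF.2 B).symm.trans (h.2 B))
    subst hPeq; subst hQeq
    exact rhs_of_fp hfin hU h hdPQ
  · rintro ⟨⟨hg1, hb1⟩, ⟨hg2, hb2⟩⟩
    have hVE : V ⊆ M.E := hV ▸ diff_subset
    -- bases of the direct sum are bases of M
    have hsum : ∀ B₁ B₂, P.IsBase B₁ → Q.IsBase B₂ → M.IsBase (B₁ ∪ B₂) := by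
      intro B₁ B₂ h1 h2
      refine hb1 _ ?_
      rw [Matroid.disjointSum_isBase_iff]
      exact ⟨by rw [union_inter_left_eq h1.subset_ground
          (hdPQ.symm.mono_left h2.subset_ground)]; exact h1,
        by rw [union_inter_right_eq h2.subset_ground
          (hdPQ.mono_left h1.subset_ground)]; exact h2,
        union_subset (h1.subset_ground.trans subset_union_left)
          (h2.subset_ground.trans subset_union_right)⟩
    have hPind : ∀ I, I ⊆ U → (P.Indep I ↔ M.Indep I) := by
      intro I hI
      constructor
      · intro hIi
        obtain ⟨B₁, h1, hIB₁⟩ := hIi.exists_isBase_superset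
        obtain ⟨B₂, h2⟩ := Q.exists_isBase
        exact (hsum B₁ B₂ h1 h2).indep.subset (hIB₁.trans subset_union_left)
      · intro hIi
        obtain ⟨B, hB, hIB⟩ := hIi.exists_isBase_superset
        have hFB := (hF.2 B).mp (hb2 B hB)
        exact hFB.2.2.1.subset (subset_inter hIB (hP ▸ hI))
    have hQsp : ∀ X, X ⊆ V → (Q.Spanning X ↔ (M.con U).Spanning X) := by
      intro X hX
      have hXV : X ⊆ M.E \ U := hV ▸ hX
      rw [Matroid.con_spanning_iff hU hXV]
      constructor
      · intro hXs
        obtain ⟨B₂, h2, hB₂X⟩ := hXs.exists_isBase_subset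
        obtain ⟨B₁, h1⟩ := P.exists_isBase
        refine (hsum B₁ B₂ h1 h2).spanning.superset
          (union_subset_union (hP ▸ h1.subset_ground) hB₂X)
          (union_subset hU (hX.trans hVE))
      · intro hXs
        obtain ⟨B, hB, hBX⟩ := hXs.exists_isBase_subset
        have hFB := (hF.2 B).mp (hb2 B hB)
        refine hFB.2.2.2.superset (fun x hx => ?_) (hQ ▸ hX)
        rcases hBX hx.1 with hxU | hxX
        · exact absurd (hQ ▸ hx.2 : x ∈ V) (fun hv => hd.ne_of_mem hxU hv rfl)
        · exact hxX
    have hPeq : P = M ↾ U := by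
      refine Matroid.ext_indep hE1 fun I hI => ?_
      have hIU : I ⊆ U := hP ▸ hI
      rw [Matroid.restrict_indep_iff, hPind I hIU]
      exact ⟨fun h' => ⟨h', hIU⟩, fun h' => h'.1⟩
    have hQeq : Q = M.con U := by
      refine Matroid.eq_of_spanning_iff_spanning_forall hE2 fun X hX => ?_
      exact hQsp X (hQ ▸ hX)
    subst hPeq; subst hQeq
    exact hF
end

section
/- In the dual algebra C* of the matroid-minor coalgebra, the product of two matroids M and N on disjoint ground sets is M · N = Σ_{M⊕N ≤ L ≤ M□N} L, the sum over all matroids L in the weak-order interval from M ⊕ N to M □ N. If the ground sets of M and N are not disjoint, then M · N = 0. -/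
attribute [local instance] Classical.propDecidable
set_option maxSynthPendingDepth 3

open Matroid

variable {α : Type*}

/-- A matroid is reducible if it is a free product of two nonempty matroids. -/
def Reducible (M : Matroid α) : Prop :=
  ∃ P Q : Matroid α, P.E.Nonempty ∧ Q.E.Nonempty ∧ IsFreeProduct P Q M

/-- A matroid is irreducible (with respect to free product) if it is nonempty and is
not a free product of two nonempty matroids. -/
def Irred (M : Matroid α) : Prop := M.E.Nonempty ∧ ¬ Reducible M

/-! ### The poset of matroids on finite subsets of `α`, under the weak order -/

/-- There are only finitely many matroids with a given finite ground set. -/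
lemma matroidOn_finite (S : Set α) (hS : S.Finite) : {M : Matroid α | M.E = S}.Finite := by
  have h2 : {T : Set (Set α) | T ⊆ {B | B ⊆ S}}.Finite := hS.finite_subsets.finite_subsets
  refine Set.Finite.of_finite_image (f := fun M => {B | M.IsBase B}) (h2.subset ?_) ?_
  · rintro T ⟨M, hM, rfl⟩
    exact fun B hB => hM ▸ hB.subset_ground
  · rintro M₁ hM₁ M₂ hM₂ hT
    exact Matroid.ext_isBase (hM₁.trans hM₂.symm)
      (fun B _ => Set.ext_iff.mp hT B)

/-- The set `W` of all matroids whose ground set is a finite subset of `α`. -/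
def FinMatroid (α : Type*) := {M : Matroid α // M.E.Finite}

namespace FinMatroid

instance : CoeTC (FinMatroid α) (Matroid α) := ⟨Subtype.val⟩

/-- Constructor for `FinMatroid`. -/
def mk (M : Matroid α) (h : M.E.Finite) : FinMatroid α := ⟨M, h⟩

/-- The rank-preserving weak order: `M ≤ N` iff `M` and `N` have the same ground set and
every base of `M` is a base of `N`. -/
instance : PartialOrder (FinMatroid α) where
  le M N := M.1.E = N.1.E ∧ ∀ B, M.1.IsBase B → N.1.IsBase B
  le_refl M := ⟨rfl, fun _ h => h⟩
  le_trans a b c h h' := ⟨h.1.trans h'.1, fun B hB => h'.2 B (h.2 B hB)⟩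
  le_antisymm a b h h' := Subtype.ext
    (Matroid.ext_isBase h.1 (fun B _ => ⟨h.2 B, h'.2 B⟩))

lemma upperSet_finite (M : FinMatroid α) : {N : FinMatroid α | M ≤ N}.Finite := by
  have hsub : {N : FinMatroid α | M ≤ N} ⊆
      Subtype.val ⁻¹' {L : Matroid α | L.E = M.1.E} := fun N hN => hN.1.symm
  exact (Set.Finite.preimage Subtype.val_injective.injOn
    (matroidOn_finite _ M.2)).subset hsub

noncomputable instance : LocallyFiniteOrder (FinMatroid α) :=
  LocallyFiniteOrder.ofFiniteIcc fun a b => (upperSet_finite a).subset fun _ hx => hx.1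

/-- Restriction, as an operation on matroids with finite ground set. For `A ⊆ M.E` this is
exactly `M|A`. -/
noncomputable def res (M : FinMatroid α) (A : Set α) : FinMatroid α :=
  ⟨M.1 ↾ (A ∩ M.1.E), by
    rw [Matroid.restrict_ground_eq]; exact M.2.subset Set.inter_subset_right⟩

/-- Contraction, as an operation on matroids with finite ground set: `M/A`. -/
noncomputable def con (M : FinMatroid α) (A : Set α) : FinMatroid α :=
  ⟨M.1.con A, by
    have : (M.1.con A).E = M.1.E \ A := by simp [Matroid.con]
    rw [this]; exact M.2.subset Set.diff_subset⟩

lemma matroidOnW_finite (S : Set α) (hS : S.Finite) :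
    {L : FinMatroid α | L.1.E = S}.Finite :=
  Set.Finite.preimage Subtype.val_injective.injOn (matroidOn_finite S hS)

end FinMatroid

/-! ### The matroid-minor coalgebra -/

/-- The underlying vector space of the matroid-minor coalgebra: the free `K`-vector space
with the set of matroids on finite subsets of `α` as basis. -/
abbrev MMC (α : Type*) (K : Type*) [Field K] : Type _ := FinMatroid α →₀ K

variable (K : Type*) [Field K]

/-- Coproduct on a basis matroid: `δ(M) = Σ_{A ⊆ E} (M|A) ⊗ (M/A)`. -/
noncomputable def deltaB (M : FinMatroid α) : TensorProduct K (MMC α K) (MMC α K) :=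
  ∑ A ∈ M.2.toFinset.powerset,
    Finsupp.single (M.res ↑A) 1 ⊗ₜ[K] Finsupp.single (M.con ↑A) 1

/-- The coproduct of the matroid-minor coalgebra. -/
noncomputable def delta : MMC α K →ₗ[K] TensorProduct K (MMC α K) (MMC α K) :=
  Finsupp.lsum K fun M => LinearMap.toSpanSingleton K _ (deltaB K M)

/-- The empty matroid. -/
def emptyW : FinMatroid α := ⟨Matroid.emptyOn α, by simp⟩

/-- The group-like element `1` of the matroid-minor coalgebra (the empty matroid). -/
noncomputable def oneC : MMC α K := Finsupp.single emptyW 1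

/-- The counit of the matroid-minor coalgebra. -/
noncomputable def counit : MMC α K →ₗ[K] K :=
  Finsupp.lsum K fun M => if M = emptyW then LinearMap.id else 0

/-- The linear map `x ↦ 1 ⊗ x + x ⊗ 1`. -/
noncomputable def groupLikeMap : MMC α K →ₗ[K] TensorProduct K (MMC α K) (MMC α K) :=
  TensorProduct.mk K (MMC α K) (MMC α K) (oneC K) +
    (TensorProduct.mk K (MMC α K) (MMC α K)).flip (oneC K)

/-- `x ↦ δ(x) - (1 ⊗ x + x ⊗ 1)`; its kernel is the space of primitive elements. -/
noncomputable def primMap : MMC α K →ₗ[K] TensorProduct K (MMC α K) (MMC α K) :=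
  delta K (α := α) - groupLikeMap (α := α) K

/-- The subspace of primitive elements of the matroid-minor coalgebra. -/
noncomputable def PrimC : Submodule K (MMC α K) := LinearMap.ker (primMap K)

/-! ### Möbius-inverted bases -/

/-- Möbius function of the weak order. -/
noncomputable def muW (M N : FinMatroid α) : ℤ := IncidenceAlgebra.mu ℤ M N

/-- The subposet `R_M = {M} ∪ {N > M : N reducible}` of the weak order. -/
def RMset (M : FinMatroid α) : Set (FinMatroid α) := {N | N = M ∨ (M < N ∧ Reducible N.1)}

lemma RMset_finite (M : FinMatroid α) : (RMset M).Finite :=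
  (FinMatroid.upperSet_finite M).subset (by rintro N (rfl | ⟨h, -⟩); exacts [le_refl N, h.le])

/-- The Möbius function `μ_R(M, N)` of the subposet `[M,N]_R = {M, N} ∪ ([M,N] ∩ R)`,
where `R` is the class of reducible matroids (the convention extending the Möbius function
of the subposet of reducible matroids to arbitrary intervals of the weak order). -/
noncomputable def muR (M N : FinMatroid α) : ℤ :=
  IncidenceAlgebra.mu ℤ
    (α := {L : FinMatroid α // L = M ∨ L = N ∨ (M ≤ L ∧ L ≤ N ∧ Reducible L.1)})
    ⟨M, Or.inl rfl⟩ ⟨N, Or.inr (Or.inl rfl)⟩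

/-- The basis element `w_M = Σ_{N ≥ M} μ_W(M,N) N`. -/
noncomputable def wElt (M : FinMatroid α) : MMC α K :=
  ∑ N ∈ (FinMatroid.upperSet_finite M).toFinset, (muW M N : K) • Finsupp.single N 1

/-- The basis element `r_M = Σ_{N ∈ R_M} μ_R(M,N) N`. -/
noncomputable def rElt (M : FinMatroid α) : MMC α K :=
  ∑ N ∈ (RMset_finite M).toFinset, (muR M N : K) • Finsupp.single N 1

/-! ### The dual algebra product -/

/-- The pairing coefficient `⟨δ(L), P ⊗ Q⟩`: the number of subsets `A ⊆ E(L)` with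
`L|A = P` and `L/A = Q`. -/
noncomputable def mulCoeff (P Q L : FinMatroid α) : K :=
  ((L.2.toFinset.powerset).filter (fun A => L.res ↑A = P ∧ L.con ↑A = Q)).card

/-- The product `P · Q` in the dual algebra `C*` of the matroid-minor coalgebra:
`P · Q = Σ_L ⟨δ(L), P ⊗ Q⟩ L` (the sum ranges over matroids on `E(P) ∪ E(Q)`,
which are the only ones with a nonzero coefficient). -/
noncomputable def mulB (P Q : FinMatroid α) : MMC α K :=
  ∑ L ∈ (FinMatroid.matroidOnW_finite (P.1.E ∪ Q.1.E) (P.2.union Q.2)).toFinset,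
    mulCoeff K P Q L • Finsupp.single L 1

/-- The subposet `I_M = {M} ∪ {N > M : N irreducible}` of the weak order. -/
def IMset (M : FinMatroid α) : Set (FinMatroid α) := {N | N = M ∨ (M < N ∧ Irred N.1)}

lemma IMset_finite (M : FinMatroid α) : (IMset M).Finite :=
  (FinMatroid.upperSet_finite M).subset (by rintro N (rfl | ⟨h, -⟩); exacts [le_refl N, h.le])

/-- `I_M \ {M}`, i.e. the set of irreducible matroids strictly above `M`. -/
def IMset' (M : FinMatroid α) : Set (FinMatroid α) := {N | M < N ∧ Irred N.1}

lemma IMset'_finite (M : FinMatroid α) : (IMset' M).Finite :=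
  (FinMatroid.upperSet_finite M).subset (fun _ h => h.1.le)


/-! ### Auxiliary lemmas for the proof -/

section AuxProof

open Set

variable {M : Matroid α} {S B I I₀ X : Set α}

lemma Matroid.con_ground' (M : Matroid α) (C : Set α) : (M.con C).E = M.E \ C := rfl

lemma con_base_iff' (hS : S ⊆ M.E) (hB : B ⊆ M.E \ S) :
    (M.con S).IsBase B ↔ M✶.IsBasis ((M.E \ S) \ B) (M.E \ S) := by
  rw [Matroid.con, dual_isBase_iff (show B ⊆ (M✶ ↾ (M.E \ S)).E from hB),
    restrict_ground_eq, isBase_restrict_iff (show M.E \ S ⊆ M✶.E from diff_subset)]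

lemma con_base_of (hS : S ⊆ M.E) (hB : B ⊆ M.E \ S) (hI : M.IsBasis I S)
    (hBI : M.IsBase (B ∪ I)) : (M.con S).IsBase B := by
  rw [con_base_iff' hS hB]
  have h1 : M.IsBasis ((B ∪ I) ∩ S) S := by
    have : (B ∪ I) ∩ S = I := by
      have hIS := hI.subset
      have hBS : Disjoint B S := disjoint_sdiff_left.mono_left hB
      ext x
      simp only [mem_inter_iff, mem_union]
      constructor
      · rintro ⟨hx | hx, hxS⟩
        · exact absurd hxS (disjoint_left.1 hBS hx)
        · exact hx
      · exact fun hx => ⟨Or.inr hx, hIS hx⟩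
    rwa [this]
  have h2 := hBI.compl_inter_isBasis_of_inter_isBasis h1
  have h3 : (M.E \ (B ∪ I)) ∩ (M.E \ S) = (M.E \ S) \ B := by
    have hIS := hI.subset
    ext x
    simp only [mem_inter_iff, mem_diff, mem_union]
    constructor
    · rintro ⟨⟨hE, hBI'⟩, _, hS'⟩
      exact ⟨⟨hE, hS'⟩, fun hxB => hBI' (Or.inl hxB)⟩
    · rintro ⟨⟨hE, hS'⟩, hxB⟩
      exact ⟨⟨hE, fun h => h.elim hxB (fun hI' => hS' (hIS hI'))⟩, hE, hS'⟩
  rwa [h3] at h2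

lemma con_base_exists (hS : S ⊆ M.E) (hB : (M.con S).IsBase B) :
    B ⊆ M.E \ S ∧ ∃ I, M.IsBasis I S ∧ M.IsBase (B ∪ I) := by
  have hBW : B ⊆ M.E \ S := hB.subset_ground
  have hb := (con_base_iff' hS hBW).1 hB
  obtain ⟨B1, hB1, heq⟩ := hb.exists_isBase
  have hB1E : B1 ⊆ M.E := hB1.subset_ground
  have hBc : M.IsBase (M.E \ B1) := hB1.compl_isBase_of_dual
  have hIbasis : M.IsBasis ((M.E \ B1) ∩ S) S := by
    rw [hBc.inter_isBasis_iff_compl_inter_isBasis_dual hS,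
      diff_diff_cancel_left hB1E, ← heq]
    exact hb
  refine ⟨hBW, (M.E \ B1) ∩ S, hIbasis, ?_⟩
  have hunion : B ∪ ((M.E \ B1) ∩ S) = M.E \ B1 := by
    ext x
    have hx := Set.ext_iff.1 heq x
    simp only [mem_diff] at hx
    have hxB : x ∈ B → x ∈ M.E \ S := fun h => hBW h
    simp only [mem_union, mem_inter_iff, mem_diff] at *
    constructor
    · rintro (hxB' | ⟨h1, _⟩)
      · obtain ⟨hE, hS'⟩ := hxB hxB'
        refine ⟨hE, fun hB1' => ?_⟩
        exact (hx.2 ⟨hB1', hE, hS'⟩).2 hxB'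
      · exact h1
    · rintro ⟨hE, hB1'⟩
      by_cases hxS : x ∈ S
      · exact Or.inr ⟨⟨hE, hB1'⟩, hxS⟩
      · left
        by_contra hxB'
        exact hB1' (hx.1 ⟨⟨hE, hxS⟩, hxB'⟩).1
  rwa [hunion]

lemma basis_swap (hfin : M.E.Finite) (hI : M.IsBasis I S) (hI0 : M.IsBasis I₀ S)
    (hX : M.Indep (X ∪ I₀)) (hdj : Disjoint X S) : M.Indep (X ∪ I) := by
  have hXE : X ⊆ M.E := (subset_union_left).trans hX.subset_ground
  have hSE : S ⊆ M.E := hI.subset_ground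
  have hXS : X ∪ S ⊆ M.E := union_subset hXE hSE
  obtain ⟨J, hJ, hJsub⟩ := hX.subset_isBasis_of_subset
    (union_subset_union_right X hI0.subset) hXS
  obtain ⟨K, hK, hIK, hKsub⟩ := hI.indep.exists_isBasis_subset_union_isBasis
    (hI.subset.trans subset_union_right) hJ
  have hKS : K ∩ S = I :=
    (hI.eq_of_subset_indep (hK.indep.inter_right S) (subset_inter hIK hI.subset)
      inter_subset_right).symm
  have hJS : J ∩ S = I₀ :=
    (hI0.eq_of_subset_indep (hJ.indep.inter_right S)
      (subset_inter ((subset_union_right).trans hJsub) hI0.subset)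
      inter_subset_right).symm
  have hKdecomp : K = I ∪ (K \ S) := by rw [← hKS, inter_union_diff]
  have hJdecomp : J = I₀ ∪ (J \ S) := by rw [← hJS, inter_union_diff]
  have hIdj : Disjoint I (K \ S) := (disjoint_sdiff_right).mono_left hI.subset
  have hI0dj : Disjoint I₀ (J \ S) := (disjoint_sdiff_right).mono_left hI0.subset
  have hKcard : K.encard = I.encard + (K \ S).encard := by
    conv_lhs => rw [hKdecomp]
    exact encard_union_eq hIdj
  have hJcard : J.encard = I₀.encard + (J \ S).encard := by
    conv_lhs => rw [hJdecomp]
    exact encard_union_eq hI0dj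
  have hKJ : K.encard = J.encard := hK.encard_eq_encard hJ
  have hII0 : I.encard = I₀.encard := hI.encard_eq_encard hI0
  have hIne : I.encard ≠ ⊤ := (hfin.subset (hI.subset.trans hSE)).encard_lt_top.ne
  have hcardeq : (K \ S).encard = (J \ S).encard := by
    have h' : I.encard + (K \ S).encard = I.encard + (J \ S).encard := by
      rw [← hKcard, hKJ, hJcard, ← hII0]
    exact WithTop.add_left_cancel hIne h'
  have hsub : K \ S ⊆ J \ S := by
    intro x hx
    rcases hKsub hx.1 with hxI | hxJ
    · exact absurd (hI.subset hxI) hx.2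
    · exact ⟨hxJ, hx.2⟩
  have hJSfin : (J \ S).Finite := hfin.subset ((diff_subset).trans hJ.indep.subset_ground)
  have heq : K \ S = J \ S :=
    hJSfin.eq_of_subset_of_encard_le' hsub hcardeq.symm.le
  have hXK : X ⊆ K := by
    have hXJS : X ⊆ J \ S := fun x hx =>
      ⟨hJsub (Or.inl hx), disjoint_left.1 hdj hx⟩
    rw [← heq] at hXJS
    exact hXJS.trans diff_subset
  exact hK.indep.subset (union_subset hXK hIK)

lemma erank_eq_of_base {B : Set α} (hB : M.IsBase B) : M.erank = B.encard := by
  apply le_antisymm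
  · exact iSup₂_le fun B' hB' => by rw [hB'.encard_eq_encard_of_isBase hB]
  · exact le_iSup₂ (f := fun (B' : Set α) (_ : B' ∈ {B | M.IsBase B}) => B'.encard) B hB

lemma con_base_forall (hfin : M.E.Finite) (hS : S ⊆ M.E) (hB : (M.con S).IsBase B)
    (hI : M.IsBasis I S) : M.IsBase (B ∪ I) := by
  obtain ⟨hBW, I₀, hI₀, hB₀⟩ := con_base_exists hS hB
  have hdj : Disjoint B S := disjoint_sdiff_left.mono_left hBW
  have hind : M.Indep (B ∪ I) := basis_swap hfin hI hI₀ hB₀.indep hdj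
  obtain ⟨B2, hB2, hsub⟩ := hind.exists_isBase_superset
  have hdjI : Disjoint B I := hdj.mono_right hI.subset
  have hdjI₀ : Disjoint B I₀ := hdj.mono_right hI₀.subset
  have hcard : B2.encard = (B ∪ I).encard := by
    rw [hB2.encard_eq_encard_of_isBase hB₀, encard_union_eq hdjI, encard_union_eq hdjI₀,
      hI.encard_eq_encard hI₀]
  have : B ∪ I = B2 :=
    (hfin.subset hB2.subset_ground).eq_of_subset_of_encard_le' hsub hcard.le
  rwa [this]

lemma con_spanning_of (hS : S ⊆ M.E) (hX : X ⊆ M.E \ S)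
    (hind : M✶.Indep ((M.E \ S) \ X)) : (M.con S).Spanning X := by
  have hres : (M✶ ↾ (M.E \ S)).Indep ((M.E \ S) \ X) :=
    hind.indep_restrict_of_subset diff_subset
  obtain ⟨B0, hB0, hsub⟩ := hres.exists_isBase_superset
  have hB0W : B0 ⊆ M.E \ S := hB0.subset_ground
  have hbase : (M.con S).IsBase ((M.E \ S) \ B0) := by
    rw [con_base_iff' hS diff_subset, diff_diff_cancel_left hB0W,
      ← isBase_restrict_iff (show M.E \ S ⊆ M✶.E from diff_subset)]
    exact hB0
  exact hbase.spanning_of_superset (diff_subset_comm.mp hsub) hX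

variable {P Q L F : Matroid α}

lemma main_forward (hfin : L.E.Finite) (hd : Disjoint P.E Q.E)
    (hL : L.E = P.E ∪ Q.E) (hF : IsFreeProduct P Q F)
    (hres : L ↾ P.E = P) (hcon : L.con P.E = Q) :
    (∀ B, (P.disjointSum Q hd).IsBase B → L.IsBase B) ∧ (∀ B, L.IsBase B → F.IsBase B) := by
  have hS : P.E ⊆ L.E := hL ▸ subset_union_left
  have hW : L.E \ P.E = Q.E := by
    rw [hL, union_diff_cancel_left hd.inter_eq.subset]
  constructor
  · intro B hB
    rw [disjointSum_isBase_iff] at hB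
    obtain ⟨hBP, hBQ, hBsub⟩ := hB
    have hBasisS : L.IsBasis (B ∩ P.E) P.E :=
      (isBase_restrict_iff hS).1 (by rw [hres]; exact hBP)
    have hconB : (L.con P.E).IsBase (B ∩ Q.E) := by rw [hcon]; exact hBQ
    have := con_base_forall hfin hS hconB hBasisS
    have hBeq : (B ∩ Q.E) ∪ (B ∩ P.E) = B := by
      rw [← inter_union_distrib_left, union_comm, ← hL,
        inter_eq_self_of_subset_left (hL ▸ hBsub)]
    rwa [hBeq] at this
  · intro B hB
    obtain ⟨I, hI⟩ := L.exists_isBasis P.E hS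
    obtain ⟨BQ, hBQ⟩ := (L.con P.E).exists_isBase
    have hBQL : L.IsBase (BQ ∪ I) := con_base_forall hfin hS hBQ hI
    have hPI : P.IsBase I := by rw [← hres]; exact hI.restrict_isBase
    have hQBQ : Q.IsBase BQ := by rw [← hcon]; exact hBQ
    have hBQW : BQ ⊆ L.E \ P.E := hBQ.subset_ground
    refine (hF.2 B).2 ⟨hL ▸ hB.subset_ground, ?_, ?_, ?_⟩
    · rw [hB.encard_eq_encard_of_isBase hBQL,
        encard_union_eq (disjoint_sdiff_left.mono_left hBQW |>.mono_right hI.subset),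
        erank_eq_of_base hPI, erank_eq_of_base hQBQ, add_comm]
    · rw [← hres]
      exact restrict_indep_iff.2 ⟨hB.indep.inter_right _, inter_subset_right⟩
    · have hXsub : B ∩ Q.E ⊆ L.E \ P.E := by rw [hW]; exact inter_subset_right
      have hsp := con_spanning_of (M := L) hS hXsub ?_
      · rwa [hcon] at hsp
      refine (hB.compl_isBase_dual).indep.subset ?_
      intro x hx
      obtain ⟨⟨hxE, hxP⟩, hxB⟩ := hx
      refine ⟨hxE, fun hxB' => hxB ⟨hxB', ?_⟩⟩
      rcases hL ▸ hxE with h | h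
      · exact absurd h hxP
      · exact h

lemma main_backward (hfin : L.E.Finite) (hd : Disjoint P.E Q.E)
    (hL : L.E = P.E ∪ Q.E) (hF : IsFreeProduct P Q F)
    (h1 : ∀ B, (P.disjointSum Q hd).IsBase B → L.IsBase B)
    (h2 : ∀ B, L.IsBase B → F.IsBase B) :
    L ↾ P.E = P ∧ L.con P.E = Q := by
  have hS : P.E ⊆ L.E := hL ▸ subset_union_left
  have hW : L.E \ P.E = Q.E := by
    rw [hL, union_diff_cancel_left hd.inter_eq.subset]
  have hsumbase : ∀ {BP BQ : Set α}, P.IsBase BP → Q.IsBase BQ → L.IsBase (BP ∪ BQ) := by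
    intro BP BQ hBP hBQ
    apply h1
    rw [disjointSum_isBase_iff]
    have e1 : (BP ∪ BQ) ∩ P.E = BP := by
      rw [union_inter_distrib_right, inter_eq_self_of_subset_left hBP.subset_ground,
        ((hd.symm.mono_left hBQ.subset_ground).inter_eq), union_empty]
    have e2 : (BP ∪ BQ) ∩ Q.E = BQ := by
      rw [union_inter_distrib_right, inter_eq_self_of_subset_left hBQ.subset_ground,
        ((hd.mono_left hBP.subset_ground).inter_eq), empty_union]
    exact ⟨by rw [e1]; exact hBP, by rw [e2]; exact hBQ,
      union_subset_union hBP.subset_ground hBQ.subset_ground⟩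
  have hres : L ↾ P.E = P := by
    refine ext_indep (by rw [restrict_ground_eq]) (fun I hI => ?_)
    rw [restrict_ground_eq] at hI
    constructor
    · intro h
      obtain ⟨B, hB, hIB⟩ := h.of_restrict.exists_isBase_superset
      exact (((hF.2 B).1 (h2 B hB)).2.2.1).subset (subset_inter hIB hI)
    · intro h
      obtain ⟨BP, hBP, hIBP⟩ := h.exists_isBase_superset
      obtain ⟨BQ, hBQ⟩ := Q.exists_isBase
      exact restrict_indep_iff.2
        ⟨(hsumbase hBP hBQ).indep.subset (hIBP.trans subset_union_left), hI⟩
  refine ⟨hres, ?_⟩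
  refine ext_indep (by rw [Matroid.con_ground', hW]) (fun I hI => ?_)
  rw [Matroid.con_ground', hW] at hI
  constructor
  · intro h
    obtain ⟨BQ, hBQ, hIBQ⟩ := h.exists_isBase_superset
    obtain ⟨hBQW, J, hJ, hBJ⟩ := con_base_exists hS hBQ
    have hFB := (hF.2 _).1 (h2 _ hBJ)
    obtain ⟨-, hcard, -, hQspan⟩ := hFB
    have hJP : P.IsBase J := by rw [← hres]; exact hJ.restrict_isBase
    have hBQT : (BQ ∪ J) ∩ Q.E = BQ := by
      rw [union_inter_distrib_right,
        inter_eq_self_of_subset_left (hW ▸ hBQW),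
        (hd.mono_left hJ.subset).inter_eq, union_empty]
    have hspan : Q.Spanning BQ := by rwa [hBQT] at hQspan
    have hdjBJ : Disjoint BQ J :=
      (disjoint_sdiff_left.mono_left hBQW).mono_right hJ.subset
    have hJne : J.encard ≠ ⊤ :=
      (hfin.subset (hJ.subset.trans hS)).encard_lt_top.ne
    have hBQcard : BQ.encard = Q.erank := by
      have h3 : J.encard + BQ.encard = J.encard + Q.erank := by
        rw [add_comm J.encard BQ.encard, ← encard_union_eq hdjBJ, hcard,
          erank_eq_of_base hJP]
      exact WithTop.add_left_cancel hJne h3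
    obtain ⟨B'', hB'', hsubB⟩ := hspan.exists_isBase_subset
    have hBQfin : BQ.Finite := hfin.subset (hBQW.trans diff_subset)
    have heq : B'' = BQ := by
      apply hBQfin.eq_of_subset_of_encard_le' hsubB
      rw [hBQcard, erank_eq_of_base hB'']
    exact (heq ▸ hB'').indep.subset hIBQ
  · intro h
    obtain ⟨BQ, hBQ, hIBQ⟩ := h.exists_isBase_superset
    obtain ⟨BP, hBP⟩ := P.exists_isBase
    have hBasisBP : L.IsBasis BP P.E :=
      (isBase_restrict_iff hS).1 (by rw [hres]; exact hBP)
    have hconB : (L.con P.E).IsBase BQ :=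
      con_base_of hS (hW ▸ hBQ.subset_ground) hBasisBP
        (by rw [union_comm]; exact hsumbase hBP hBQ)
    exact hconB.indep.subset hIBQ

/-! Glue lemmas for `FinMatroid` -/

variable (K : Type*) [Field K]

lemma FinMatroid.le_iff {M N : FinMatroid α} :
    M ≤ N ↔ (M.1.E = N.1.E ∧ ∀ B, M.1.IsBase B → N.1.IsBase B) := Iff.rfl

lemma res_eq_ground {L P : FinMatroid α} {A : Set α} (hAL : A ⊆ L.1.E)
    (h : L.res A = P) : A = P.1.E := by
  have h2 := congrArg (fun M : FinMatroid α => M.1.E) h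
  simpa [FinMatroid.res, inter_eq_self_of_subset_left hAL] using h2

lemma con_eq_ground {L Q : FinMatroid α} {A : Set α}
    (h : L.con A = Q) : Q.1.E = L.1.E \ A := by
  have h2 := congrArg (fun M : FinMatroid α => M.1.E) h
  simpa [FinMatroid.con, Matroid.con] using h2.symm

lemma key_mem {L : FinMatroid α} {X : Finset (Set α)}
    (hX : ∀ A : Set α, A ∈ X ↔ ∃ a : Finset α, a ⊆ L.2.toFinset ∧ ↑a = A) :
    ∀ A : Set α, A ∈ X ↔ A ⊆ L.1.E := by
  intro A
  rw [hX]
  constructor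
  · rintro ⟨a, ha, rfl⟩
    rw [← L.2.coe_toFinset]
    exact Finset.coe_subset.2 ha
  · intro hAL
    have hAfin : A.Finite := L.2.subset hAL
    refine ⟨hAfin.toFinset, ?_, hAfin.coe_toFinset⟩
    rw [← Finset.coe_subset, hAfin.coe_toFinset, L.2.coe_toFinset]
    exact hAL

lemma key_card (P Q L : FinMatroid α) (hSL : P.1.E ⊆ L.1.E) (X : Finset (Set α))
    (hX : ∀ A : Set α, A ∈ X ↔ ∃ a : Finset α, a ⊆ L.2.toFinset ∧ ↑a = A) :
    ((X.filter (fun A => L.res A = P ∧ L.con A = Q)).card : K) =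
      if (L.res P.1.E = P ∧ L.con P.1.E = Q) then 1 else 0 := by
  have hXmem := key_mem hX
  split_ifs with h
  · have hsingle : X.filter (fun A => L.res A = P ∧ L.con A = Q) = {P.1.E} := by
      apply Finset.eq_singleton_iff_unique_mem.2
      constructor
      · exact Finset.mem_filter.2 ⟨(hXmem _).2 hSL, h⟩
      · intro A hA
        obtain ⟨hmem, h1, _⟩ := Finset.mem_filter.1 hA
        exact res_eq_ground ((hXmem A).1 hmem) h1
    rw [hsingle, Finset.card_singleton, Nat.cast_one]
  · have hempty : X.filter (fun A => L.res A = P ∧ L.con A = Q) = ∅ := by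
      apply Finset.filter_eq_empty_iff.2
      rintro A hmem ⟨h1, h2⟩
      have hAeq := res_eq_ground ((hXmem A).1 hmem) h1
      exact h ⟨hAeq ▸ h1, hAeq ▸ h2⟩
    rw [hempty, Finset.card_empty, Nat.cast_zero]

lemma key_card_zero (P Q L : FinMatroid α) (hnd : ¬ Disjoint P.1.E Q.1.E)
    (X : Finset (Set α))
    (hX : ∀ A : Set α, A ∈ X ↔ ∃ a : Finset α, a ⊆ L.2.toFinset ∧ ↑a = A) :
    ((X.filter (fun A => L.res A = P ∧ L.con A = Q)).card : K) = 0 := by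
  have hXmem := key_mem hX
  have hempty : X.filter (fun A => L.res A = P ∧ L.con A = Q) = ∅ := by
    apply Finset.filter_eq_empty_iff.2
    rintro A hmem ⟨h1, h2⟩
    refine hnd ?_
    rw [← res_eq_ground ((hXmem A).1 hmem) h1, con_eq_ground h2]
    exact disjoint_sdiff_right
  rw [hempty, Finset.card_empty, Nat.cast_zero]

lemma mulCoeff_eq (P Q L : FinMatroid α) (hSL : P.1.E ⊆ L.1.E) :
    mulCoeff K P Q L =
      if (L.res P.1.E = P ∧ L.con P.1.E = Q) then 1 else 0 := by
  unfold mulCoeff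
  apply key_card K P Q L hSL
  intro A
  simp only [Finset.pure_def, Finset.bind_def, Finset.sup_singleton_apply, Finset.mem_image,
    Finset.mem_powerset]

lemma mulCoeff_zero (P Q : FinMatroid α) (hnd : ¬ Disjoint P.1.E Q.1.E)
    (L : FinMatroid α) : mulCoeff K P Q L = 0 := by
  unfold mulCoeff
  apply key_card_zero K P Q L hnd
  intro A
  simp only [Finset.pure_def, Finset.bind_def, Finset.sup_singleton_apply, Finset.mem_image,
    Finset.mem_powerset]

end AuxProof

/-- in the dual algebra `C*` of the matroid-minor coalgebra, the product of
matroids `M, N` on disjoint ground sets is `M · N = Σ_{M⊕N ≤ L ≤ M□N} L`, the sum over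
the weak-order interval from `M ⊕ N` to `M □ N`; if the ground sets are not disjoint,
then `M · N = 0`. -/
theorem dual_algebra_product_formula (P Q : FinMatroid α) :
    (∀ (hd : Disjoint P.1.E Q.1.E) (F : FinMatroid α), IsFreeProduct P.1 Q.1 F.1 →
      mulB K P Q = ∑ L ∈ Finset.Icc
          (FinMatroid.mk (P.1.disjointSum Q.1 hd) (by
            rw [Matroid.disjointSum_ground_eq]; exact P.2.union Q.2)) F,
        Finsupp.single L (1 : K)) ∧
    (¬ Disjoint P.1.E Q.1.E → mulB K P Q = 0) := by
  constructor
  · intro hd F hFP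
    unfold mulB
    have key : ∀ L ∈ (FinMatroid.matroidOnW_finite (P.1.E ∪ Q.1.E)
        (P.2.union Q.2)).toFinset,
        mulCoeff K P Q L • Finsupp.single L (1:K) =
          if (L.res P.1.E = P ∧ L.con P.1.E = Q) then Finsupp.single L (1:K)
          else 0 := by
      intro L hL
      have hLE : L.1.E = P.1.E ∪ Q.1.E := by
        simpa using (Set.Finite.mem_toFinset _).1 hL
      rw [mulCoeff_eq K P Q L (hLE ▸ Set.subset_union_left)]
      split_ifs <;> simp
    rw [Finset.sum_congr rfl key, ← Finset.sum_filter]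
    refine Finset.sum_congr ?_ (fun _ _ => rfl)
    apply Finset.ext
    intro L
    rw [Finset.mem_filter, Finset.mem_Icc, Set.Finite.mem_toFinset, Set.mem_setOf_eq,
      FinMatroid.le_iff, FinMatroid.le_iff]
    constructor
    · rintro ⟨hLE, hresL, hconL⟩
      have hres' : L.1 ↾ P.1.E = P.1 := by
        have h2 := congrArg Subtype.val hresL
        simpa [FinMatroid.res,
          Set.inter_eq_self_of_subset_left
            (show P.1.E ⊆ L.1.E from hLE ▸ Set.subset_union_left)] using h2
      have hcon' : L.1.con P.1.E = Q.1 := congrArg Subtype.val hconL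
      obtain ⟨ha, hb⟩ := main_forward L.2 hd hLE hFP hres' hcon'
      refine ⟨⟨?_, ha⟩, ?_, hb⟩
      · show (P.1.disjointSum Q.1 hd).E = L.1.E
        rw [Matroid.disjointSum_ground_eq, hLE]
      · rw [hLE, hFP.1]
    · rintro ⟨⟨hg1, ha⟩, hg2, hb⟩
      have hLE : L.1.E = P.1.E ∪ Q.1.E := by
        rw [← hg1]
        exact Matroid.disjointSum_ground_eq
      obtain ⟨hres', hcon'⟩ := main_backward L.2 hd hLE hFP ha hb
      refine ⟨hLE, ?_, Subtype.ext hcon'⟩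
      apply Subtype.ext
      show L.1 ↾ (P.1.E ∩ L.1.E) = P.1
      rwa [Set.inter_eq_self_of_subset_left
        (show P.1.E ⊆ L.1.E from hLE ▸ Set.subset_union_left)]
  · intro hnd
    unfold mulB
    refine Finset.sum_eq_zero (fun L _ => ?_)
    rw [mulCoeff_zero K P Q hnd L, zero_smul]
end
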